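/- arXiv:1505.03654 — 4 statements merged into one kernel-verified Lean document; each statement's English description precedes it below -/
import Mathlib

section
/- Let m ≥ 1, let f ∈ L¹(ℝ^m, ℂ), let ψ : ℝ → ℂ be (essentially) bounded and measurable, and let T ∈ L¹(ℝ^m × ℝ, ℂ). Then the function (x,a,b) ↦ f(x) · conj(ψ(⟨a,x⟩ − b) · T(a,b)) is integrable on ℝ^m × (ℝ^m × ℝ), and the duality identity ∫_{ℝ^m × ℝ} (∫_{ℝ^m} f(x) · conj(ψ(⟨a,x⟩ − b)) dx) · conj(T(a,b)) da db = ∫_{ℝ^m} f(x) · conj(∫_{ℝ^m × ℝ} T(a,b) · ψ(⟨a,x⟩ − b) da db) dx holds; that is, ⟨R_ψf, T⟩ = ⟨f, R†_ψT⟩, so the dual ridgelet transform is the dual operator of the ridgelet transform. -/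
open MeasureTheory
open scoped RealInnerProductSpace

lemma phi_qmp (m : ℕ) :
    Measure.QuasiMeasurePreserving
      (fun q : EuclideanSpace ℝ (Fin m) × (EuclideanSpace ℝ (Fin m) × ℝ) =>
        ⟪q.2.1, q.1⟫ - q.2.2) volume volume := by
  have hmeas : Measurable
      (fun q : EuclideanSpace ℝ (Fin m) × (EuclideanSpace ℝ (Fin m) × ℝ) =>
        ⟪q.2.1, q.1⟫ - q.2.2) :=
    (measurable_snd.fst.inner measurable_fst).sub measurable_snd.snd
  refine ⟨hmeas, Measure.AbsolutelyContinuous.mk fun s hs hs0 => ?_⟩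
  rw [Measure.map_apply hmeas hs]
  rw [show (volume : Measure (EuclideanSpace ℝ (Fin m) × (EuclideanSpace ℝ (Fin m) × ℝ)))
      = (volume : Measure (EuclideanSpace ℝ (Fin m))).prod volume from rfl]
  rw [Measure.measure_prod_null (hmeas hs)]
  filter_upwards with x
  simp only [Pi.zero_apply]
  rw [show (volume : Measure (EuclideanSpace ℝ (Fin m) × ℝ))
      = (volume : Measure (EuclideanSpace ℝ (Fin m))).prod volume from rfl]
  rw [Measure.measure_prod_null]
  · filter_upwards with a
    simp only [Pi.zero_apply]
    have hmp := Measure.measurePreserving_sub_left (volume : Measure ℝ) (⟪a, x⟫)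
    have : (fun b : ℝ => ⟪a, x⟫ - b) ⁻¹' s = Prod.mk a ⁻¹' (Prod.mk x ⁻¹' ((fun q : EuclideanSpace ℝ (Fin m) × (EuclideanSpace ℝ (Fin m) × ℝ) => ⟪q.2.1, q.1⟫ - q.2.2) ⁻¹' s)) := rfl
    rw [← this, hmp.measure_preimage hs.nullMeasurableSet, hs0]
  · exact measurable_prodMk_left (hmeas hs)

/-- For `f ∈ L¹(ℝ^m)`, `ψ` essentially bounded measurable, and
`T ∈ L¹(ℝ^m × ℝ)`, the function `(x,(a,b)) ↦ f(x)·conj(ψ(⟨a,x⟩−b)·T(a,b))` is integrable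
on the product, and the duality identity `⟨R_ψ f, T⟩ = ⟨f, R†_ψ T⟩` holds. -/
theorem stmt2 (m : ℕ) (hm : 1 ≤ m)
    (f : EuclideanSpace ℝ (Fin m) → ℂ) (hf : Integrable f)
    (ψ : ℝ → ℂ) (hψmeas : AEStronglyMeasurable ψ volume) (hψbdd : MemLp ψ ⊤ volume)
    (T : EuclideanSpace ℝ (Fin m) × ℝ → ℂ) (hT : Integrable T) :
    Integrable (fun q : EuclideanSpace ℝ (Fin m) × (EuclideanSpace ℝ (Fin m) × ℝ) =>
      f q.1 * (starRingEnd ℂ) (ψ (⟪q.2.1, q.1⟫ - q.2.2) * T q.2)) ∧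
    ∫ p : EuclideanSpace ℝ (Fin m) × ℝ,
        (∫ x : EuclideanSpace ℝ (Fin m), f x * (starRingEnd ℂ) (ψ (⟪p.1, x⟫ - p.2)))
          * (starRingEnd ℂ) (T p)
      = ∫ x : EuclideanSpace ℝ (Fin m),
          f x * (starRingEnd ℂ)
            (∫ p : EuclideanSpace ℝ (Fin m) × ℝ, T p * ψ (⟪p.1, x⟫ - p.2)) := by
  set φ : EuclideanSpace ℝ (Fin m) × (EuclideanSpace ℝ (Fin m) × ℝ) → ℝ :=
    fun q => ⟪q.2.1, q.1⟫ - q.2.2 with hφ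
  have hqmp := phi_qmp m
  -- a.e. bound for ψ
  set C : ℝ := (eLpNormEssSup ψ volume).toReal with hC
  have hCfin : eLpNormEssSup ψ volume < ⊤ := by
    have := hψbdd.2
    rwa [eLpNorm_exponent_top] at this
  have hψle : ∀ᵐ y ∂(volume : Measure ℝ), ‖ψ y‖ ≤ C := by
    filter_upwards [enorm_ae_le_eLpNormEssSup ψ volume] with y hy
    have h2 := ENNReal.toReal_mono hCfin.ne hy
    simpa using h2
  have hψφle : ∀ᵐ q ∂(volume : Measure (EuclideanSpace ℝ (Fin m) × (EuclideanSpace ℝ (Fin m) × ℝ))),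
      ‖ψ (φ q)‖ ≤ C := hqmp.ae hψle
  -- measurability
  have hsm : AEStronglyMeasurable
      (fun q : EuclideanSpace ℝ (Fin m) × (EuclideanSpace ℝ (Fin m) × ℝ) =>
        f q.1 * (starRingEnd ℂ) (ψ (φ q) * T q.2)) volume := by
    have h1 : AEStronglyMeasurable (fun q : EuclideanSpace ℝ (Fin m) × (EuclideanSpace ℝ (Fin m) × ℝ) => f q.1) volume :=
      hf.aestronglyMeasurable.comp_fst
    have h2 : AEStronglyMeasurable (fun q : EuclideanSpace ℝ (Fin m) × (EuclideanSpace ℝ (Fin m) × ℝ) => ψ (φ q)) volume :=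
      hψmeas.comp_quasiMeasurePreserving hqmp
    have h3 : AEStronglyMeasurable (fun q : EuclideanSpace ℝ (Fin m) × (EuclideanSpace ℝ (Fin m) × ℝ) => T q.2) volume :=
      hT.aestronglyMeasurable.comp_snd
    exact h1.mul (Complex.continuous_conj.comp_aestronglyMeasurable (h2.mul h3))
  -- integrability
  have hint : Integrable (fun q : EuclideanSpace ℝ (Fin m) × (EuclideanSpace ℝ (Fin m) × ℝ) =>
      f q.1 * (starRingEnd ℂ) (ψ (φ q) * T q.2)) volume := by
    have hbd : Integrable (fun q : EuclideanSpace ℝ (Fin m) × (EuclideanSpace ℝ (Fin m) × ℝ) =>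
        ‖f q.1‖ * (C * ‖T q.2‖)) volume :=
      hf.norm.mul_prod (hT.norm.const_mul C)
    refine hbd.mono' hsm ?_
    filter_upwards [hψφle] with q hq
    calc ‖f q.1 * (starRingEnd ℂ) (ψ (φ q) * T q.2)‖
        = ‖f q.1‖ * (‖ψ (φ q)‖ * ‖T q.2‖) := by
          simp [norm_mul]
      _ ≤ ‖f q.1‖ * (C * ‖T q.2‖) := by
          gcongr
  refine ⟨hint, ?_⟩
  have hswap := integral_integral_swap (f := fun x (p : EuclideanSpace ℝ (Fin m) × ℝ) =>
      f x * (starRingEnd ℂ) (ψ (⟪p.1, x⟫ - p.2) * T p)) hint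
  calc ∫ p : EuclideanSpace ℝ (Fin m) × ℝ,
        (∫ x : EuclideanSpace ℝ (Fin m), f x * (starRingEnd ℂ) (ψ (⟪p.1, x⟫ - p.2)))
          * (starRingEnd ℂ) (T p)
      = ∫ p : EuclideanSpace ℝ (Fin m) × ℝ, ∫ x : EuclideanSpace ℝ (Fin m),
          f x * (starRingEnd ℂ) (ψ (⟪p.1, x⟫ - p.2) * T p) := by
        congr 1; ext p
        rw [← integral_mul_const]
        congr 1; ext x
        rw [map_mul, mul_assoc]
    _ = ∫ x : EuclideanSpace ℝ (Fin m), ∫ p : EuclideanSpace ℝ (Fin m) × ℝ,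
          f x * (starRingEnd ℂ) (ψ (⟪p.1, x⟫ - p.2) * T p) := hswap.symm
    _ = ∫ x : EuclideanSpace ℝ (Fin m),
          f x * (starRingEnd ℂ)
            (∫ p : EuclideanSpace ℝ (Fin m) × ℝ, T p * ψ (⟪p.1, x⟫ - p.2)) := by
        congr 1; ext x
        rw [← integral_conj, ← integral_const_mul]
        congr 1; ext p
        rw [mul_comm (T p)]
end

section
/- Let m ≥ 1, let f ∈ L¹(ℝ^m, ℂ), let ψ : ℝ → ℂ be (essentially) bounded and measurable, and fix a unit vector u ∈ ℝ^m, α > 0 and β ∈ ℝ. Then: (i) for almost every p ∈ ℝ the function y ↦ f(p·u + y) is integrable on the orthogonal complement (ℝu)^⊥ (equipped with its Lebesgue measure), so the Radon transform Rf(u,p) = ∫_{(ℝu)^⊥} f(p·u + y) dy is defined for a.e. p and is integrable in p; and (ii) the ridgelet transform factors through the Radon transform: ∫_{ℝ^m} f(x) · conj(ψ((⟨u,x⟩ − β)/α)) · α^{−1} dx = ∫_ℝ Rf(u,p) · conj(ψ((p − β)/α)) · α^{−1} dp. -/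
open MeasureTheory
open scoped RealInnerProductSpace ENNReal

/-- For `f ∈ L¹(ℝ^m)`, `ψ` essentially bounded measurable, a unit
vector `u`, `α > 0` and `β ∈ ℝ`: (i) for a.e. `p` the slice `y ↦ f(p·u + y)` is
integrable on `(ℝu)^⊥` (with its canonical Lebesgue measure), the Radon transform
`Rf(u,p)` is integrable in `p`; and (ii) the ridgelet transform factors through the
Radon transform. -/
theorem stmt3 (m : ℕ) (hm : 1 ≤ m)
    (f : EuclideanSpace ℝ (Fin m) → ℂ) (hf : Integrable f)
    (ψ : ℝ → ℂ) (hψmeas : AEStronglyMeasurable ψ volume) (hψbdd : MemLp ψ ⊤ volume)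
    (u : EuclideanSpace ℝ (Fin m)) (hu : ‖u‖ = 1) (α : ℝ) (hα : 0 < α) (β : ℝ) :
    (∀ᵐ p : ℝ, Integrable (fun y : ((ℝ ∙ u)ᗮ : Submodule ℝ (EuclideanSpace ℝ (Fin m))) =>
        f (p • u + (y : EuclideanSpace ℝ (Fin m))))) ∧
    Integrable (fun p : ℝ =>
      ∫ y : ((ℝ ∙ u)ᗮ : Submodule ℝ (EuclideanSpace ℝ (Fin m))),
        f (p • u + (y : EuclideanSpace ℝ (Fin m)))) ∧
    ∫ x : EuclideanSpace ℝ (Fin m),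
        f x * (starRingEnd ℂ) (ψ ((⟪u, x⟫ - β) / α)) * ((α⁻¹ : ℝ) : ℂ)
      = ∫ p : ℝ,
          (∫ y : ((ℝ ∙ u)ᗮ : Submodule ℝ (EuclideanSpace ℝ (Fin m))),
            f (p • u + (y : EuclideanSpace ℝ (Fin m))))
            * (starRingEnd ℂ) (ψ ((p - β) / α)) * ((α⁻¹ : ℝ) : ℂ) := by
  classical
  obtain ⟨n, rfl⟩ : ∃ n, m = n + 1 := ⟨m - 1, by omega⟩
  have hu0 : u ≠ 0 := fun h => by simp [h] at hu
  set W : Submodule ℝ (EuclideanSpace ℝ (Fin (n+1))) := (ℝ ∙ u)ᗮ with hWdef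
  have hWrank : Module.finrank ℝ W = n := by
    have h1 : Module.finrank ℝ (ℝ ∙ u) = 1 := finrank_span_singleton hu0
    have h2 := Submodule.finrank_add_finrank_orthogonal (K := (ℝ ∙ u))
    rw [hWdef]
    rw [h1] at h2
    have h3 : Module.finrank ℝ (EuclideanSpace ℝ (Fin (n+1))) = n + 1 := by
      simp [finrank_euclideanSpace]
    rw [h3] at h2
    omega
  let c : OrthonormalBasis (Fin n) ℝ W := (stdOrthonormalBasis ℝ W).reindex (finCongr hWrank)
  let v : Fin (n+1) → EuclideanSpace ℝ (Fin (n+1)) :=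
    Fin.cons u (fun i => (c i : EuclideanSpace ℝ (Fin (n+1))))
  have hcu : ∀ i : Fin n, ⟪u, (c i : EuclideanSpace ℝ (Fin (n+1)))⟫ = 0 := fun i =>
    (Submodule.mem_orthogonal _ _).1 (c i).2 u (Submodule.mem_span_singleton_self u)
  have hv : Orthonormal ℝ v := by
    rw [orthonormal_iff_ite]
    intro i j
    refine Fin.cases ?_ ?_ i <;> [skip; intro i'] <;> refine Fin.cases ?_ ?_ j
    · simp only [v, Fin.cons_zero, if_pos rfl]
      rw [real_inner_self_eq_norm_mul_norm, hu]; norm_num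
    · intro j'
      simp [v, hcu j', (Fin.succ_ne_zero j').symm]
    · rw [real_inner_comm]
      simp [v, hcu i', Fin.succ_ne_zero i']
    · intro j'
      have := (orthonormal_iff_ite.1 c.orthonormal) i' j'
      simp only [v, Fin.cons_succ]
      rw [← Submodule.coe_inner] at *
      simpa [Fin.succ_inj] using this
  obtain ⟨b, hb⟩ := hv.comp _ (Subtype.val_injective (p := (· ∈ (Set.univ : Set (Fin (n+1))))))
    |>.exists_orthonormalBasis_extension_of_card_eq (by simp [finrank_euclideanSpace])
  have hb' : ∀ i, b i = v i := fun i => hb i (Set.mem_univ i)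
  -- the measurable equivalence
  let e₁ : (ℝ × W) ≃ᵐ (ℝ × EuclideanSpace ℝ (Fin n)) :=
    (MeasurableEquiv.refl ℝ).prodCongr c.measurableEquiv
  let e₂ : (ℝ × EuclideanSpace ℝ (Fin n)) ≃ᵐ (ℝ × (Fin n → ℝ)) :=
    (MeasurableEquiv.refl ℝ).prodCongr (MeasurableEquiv.toLp 2 (Fin n → ℝ)).symm
  let e₃ : (ℝ × (Fin n → ℝ)) ≃ᵐ (Fin (n+1) → ℝ) :=
    (MeasurableEquiv.piFinSuccAbove (fun _ => ℝ) 0).symm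
  let e₄ : (Fin (n+1) → ℝ) ≃ᵐ EuclideanSpace ℝ (Fin (n+1)) :=
    (MeasurableEquiv.toLp 2 (Fin (n+1) → ℝ)).symm.symm
  let e₅ : EuclideanSpace ℝ (Fin (n+1)) ≃ᵐ EuclideanSpace ℝ (Fin (n+1)) :=
    b.measurableEquiv.symm
  let Θ : (ℝ × W) ≃ᵐ EuclideanSpace ℝ (Fin (n+1)) := (((e₁.trans e₂).trans e₃).trans e₄).trans e₅
  have hΘmp : MeasurePreserving Θ (volume.prod volume) volume := by
    have h₁ : MeasurePreserving e₁ (volume.prod volume) (volume.prod volume) :=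
      (MeasurePreserving.id volume).prod c.measurePreserving_measurableEquiv
    have h₂ : MeasurePreserving e₂ (volume.prod volume) (volume.prod volume) :=
      (MeasurePreserving.id volume).prod (EuclideanSpace.volume_preserving_symm_measurableEquiv_toLp (Fin n))
    have h₃ : MeasurePreserving e₃ (volume.prod volume) volume :=
      (volume_preserving_piFinSuccAbove (fun _ : Fin (n+1) => ℝ) 0).symm
    have h₄ : MeasurePreserving e₄ volume volume :=
      (EuclideanSpace.volume_preserving_symm_measurableEquiv_toLp (Fin (n+1))).symm
    have h₅ : MeasurePreserving e₅ volume volume := b.measurePreserving_measurableEquiv.symm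
    exact (((h₅.comp h₄).comp h₃).comp h₂).comp h₁
  have hΘfun : ∀ (p : ℝ) (y : W), Θ (p, y) = p • u + (y : EuclideanSpace ℝ (Fin (n+1))) := by
    intro p y
    have : Θ (p, y) = b.repr.symm (e₄ (e₃ (p, fun i => c.repr y i))) := rfl
    rw [this]
    have he₃ : e₃ (p, fun i => c.repr y i) = Fin.cons p (fun i => c.repr y i) := by
      simp [e₃, MeasurableEquiv.piFinSuccAbove, Fin.insertNthEquiv, Fin.insertNth_zero]
    rw [he₃]
    have he₄ : ∀ z : Fin (n+1) → ℝ, (e₄ z : EuclideanSpace ℝ (Fin (n+1))) = WithLp.toLp 2 z := fun _ => rfl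
    rw [he₄]
    rw [← b.sum_repr_symm]
    rw [Fin.sum_univ_succ]
    simp only [PiLp.toLp_apply, Fin.cons_zero, Fin.cons_succ, hb', v]
    congr 1
    have : ∀ i : Fin n, c.repr y i • (c i : EuclideanSpace ℝ (Fin (n+1)))
        = ((c.repr y i • c i : W) : EuclideanSpace ℝ (Fin (n+1))) := fun i => rfl
    rw [Finset.sum_congr rfl (fun i _ => this i), ← Submodule.coe_sum]
    rw [c.sum_repr y]
  -- integrability of the composed function
  have hfΘ : Integrable (fun q : ℝ × W => f (q.1 • u + (q.2 : EuclideanSpace ℝ (Fin (n+1)))))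
      (volume.prod volume) := by
    have h : Integrable (f ∘ Θ) (volume.prod volume) :=
      (hΘmp.integrable_comp_emb Θ.measurableEmbedding).2 hf
    refine h.congr (Filter.Eventually.of_forall fun q => ?_)
    exact congrArg f (hΘfun q.1 q.2)
  refine ⟨hfΘ.prod_right_ae, hfΘ.integral_prod_left, ?_⟩
  -- the bounded factor
  set l : ℝ → ℝ := fun p => (p - β) / α with hldef
  have hqmp : Measure.QuasiMeasurePreserving l volume volume := by
    have h1 : Measure.QuasiMeasurePreserving (fun p : ℝ => p - β) volume volume :=
      (measurePreserving_sub_right volume β).quasiMeasurePreserving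
    have h2 : Measure.QuasiMeasurePreserving (fun q : ℝ => q * α⁻¹) volume volume :=
      ⟨measurable_mul_const _, by
        rw [Real.map_volume_mul_right (inv_ne_zero hα.ne')]
        exact Measure.smul_absolutelyContinuous⟩
    have hcomp : l = (fun q : ℝ => q * α⁻¹) ∘ (fun p : ℝ => p - β) := by
      funext p; simp [hldef, div_eq_mul_inv]
    rw [hcomp]; exact h2.comp h1
  set C : ℝ → ℂ := fun p => (starRingEnd ℂ) (ψ (l p)) * ((α⁻¹ : ℝ) : ℂ) with hCdef
  have hCmeas : AEStronglyMeasurable C volume := by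
    have h1 : AEStronglyMeasurable (fun p => ψ (l p)) volume :=
      hψmeas.comp_quasiMeasurePreserving hqmp
    exact (Complex.continuous_conj.comp_aestronglyMeasurable h1).mul_const _
  have hψb : ∀ᵐ x ∂(volume : Measure ℝ), ‖ψ x‖ ≤ (eLpNormEssSup ψ volume).toReal := by
    have h1 : eLpNormEssSup ψ volume ≠ ⊤ := by
      have h := hψbdd.2
      rwa [eLpNorm_exponent_top, lt_top_iff_ne_top] at h
    filter_upwards [ae_le_eLpNormEssSup (f := ψ) (μ := volume)] with x hx
    have : ((‖ψ x‖₊ : ℝ≥0∞)).toReal ≤ (eLpNormEssSup ψ volume).toReal :=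
      ENNReal.toReal_mono h1 hx
    simpa using this
  have hCbd : ∀ᵐ p ∂(volume : Measure ℝ),
      ‖C p‖ ≤ (eLpNormEssSup ψ volume).toReal * |α⁻¹| := by
    filter_upwards [hqmp.ae hψb] with p hp
    have : ‖C p‖ = ‖ψ (l p)‖ * |α⁻¹| := by
      rw [hCdef]
      simp [norm_mul, Complex.norm_real, abs_inv]
    rw [this]
    exact mul_le_mul_of_nonneg_right hp (abs_nonneg _)
  have hFint : Integrable
      (fun q : ℝ × W => f (q.1 • u + (q.2 : EuclideanSpace ℝ (Fin (n+1)))) * C q.1)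
      (volume.prod volume) := by
    have h := hfΘ.bdd_mul
      (hCmeas.comp_quasiMeasurePreserving Measure.quasiMeasurePreserving_fst)
      (Measure.quasiMeasurePreserving_fst.ae hCbd)
    exact h.congr (Filter.Eventually.of_forall fun q => mul_comm _ _)
  have hinner : ∀ (p : ℝ) (y : W), ⟪u, p • u + (y : EuclideanSpace ℝ (Fin (n+1)))⟫ = p := by
    intro p y
    rw [inner_add_right, real_inner_smul_right, real_inner_self_eq_norm_mul_norm, hu,
      (Submodule.mem_orthogonal _ _).1 y.2 u (Submodule.mem_span_singleton_self u)]
    ring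
  calc
    ∫ x, f x * (starRingEnd ℂ) (ψ ((⟪u, x⟫ - β) / α)) * ((α⁻¹ : ℝ) : ℂ)
        = ∫ q : ℝ × W, f (Θ q) * (starRingEnd ℂ) (ψ ((⟪u, Θ q⟫ - β) / α)) * ((α⁻¹ : ℝ) : ℂ)
            ∂(volume.prod volume) :=
      (hΘmp.integral_comp Θ.measurableEmbedding _).symm
    _ = ∫ q : ℝ × W, f (q.1 • u + (q.2 : EuclideanSpace ℝ (Fin (n+1)))) * C q.1
            ∂(volume.prod volume) := by
      refine integral_congr_ae (Filter.Eventually.of_forall fun q => ?_)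
      simp only [hΘfun q.1 q.2, hinner q.1 q.2, hCdef, hldef, mul_assoc]
    _ = ∫ p : ℝ, ∫ y : W, f (p • u + (y : EuclideanSpace ℝ (Fin (n+1)))) * C p := integral_prod _ hFint
    _ = ∫ p : ℝ, (∫ y : W, f (p • u + (y : EuclideanSpace ℝ (Fin (n+1))))) * C p := by
      refine integral_congr_ae (Filter.Eventually.of_forall fun p => ?_)
      exact integral_mul_const _ _
    _ = ∫ p : ℝ,
          (∫ y : W, f (p • u + (y : EuclideanSpace ℝ (Fin (n+1)))))
            * (starRingEnd ℂ) (ψ ((p - β) / α)) * ((α⁻¹ : ℝ) : ℂ) := by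
      refine integral_congr_ae (Filter.Eventually.of_forall fun p => ?_)
      simp only [mul_assoc, hCdef, hldef]
end

section
/- Let m ≥ 1, let f ∈ L¹(ℝ^m, ℂ), and let ψ : ℝ → ℂ be a Schwartz function. Then for every unit vector u ∈ ℝ^m, every α > 0 and every β ∈ ℝ, the ridgelet transform has the Fourier representation ∫_{ℝ^m} f(x) · conj(ψ((⟨u,x⟩ − β)/α)) · α^{−1} dx = (2π)^{−1} ∫_ℝ 𝓕f(ω·u) · conj(𝓕ψ(α·ω)) · e^{iωβ} dω, where the right-hand integrand is integrable in ω. -/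
open MeasureTheory
open scoped RealInnerProductSpace SchwartzMap

/-- The one-dimensional Fourier transform `𝓕ψ(ω) = ∫ ψ(t) e^{−iωt} dt`. -/
noncomputable def fourierLine (ψ : ℝ → ℂ) (ω : ℝ) : ℂ :=
  ∫ t : ℝ, ψ t * Complex.exp (-(Complex.I * ω * t))

/-- The `m`-dimensional Fourier transform `𝓕f(ξ) = ∫ f(x) e^{−i⟨ξ,x⟩} dx`. -/
noncomputable def fourierEuc {m : ℕ} (f : EuclideanSpace ℝ (Fin m) → ℂ)
    (ξ : EuclideanSpace ℝ (Fin m)) : ℂ :=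
  ∫ x : EuclideanSpace ℝ (Fin m), f x * Complex.exp (-(Complex.I * (⟪ξ, x⟫ : ℝ)))

open Real Complex
open scoped FourierTransform

lemma L1 (ψ : ℝ → ℂ) (ω : ℝ) : fourierLine ψ ω = 𝓕 ψ (ω / (2 * π)) := by
  rw [Real.fourier_real_eq_integral_exp_smul]
  unfold fourierLine
  congr 1
  funext t
  rw [smul_eq_mul, mul_comm]
  congr 2
  have hπ : (2 * π) ≠ 0 := by positivity
  have : -2 * π * t * (ω / (2 * π)) = -(ω * t) := by field_simp
  rw [this]
  push_cast
  ring

lemma L2 (ψ : 𝓢(ℝ, ℂ)) (s : ℝ) :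
    ∫ ω : ℝ, fourierLine (⇑ψ) ω * Complex.exp (Complex.I * ω * s)
      = ((2 * π : ℝ) : ℂ) * ψ s := by
  have hπ : (0:ℝ) < 2 * π := by positivity
  set h : ℝ → ℂ := fun ξ => Complex.exp (((2 * π * ξ * s : ℝ) : ℂ) * Complex.I) * 𝓕 (⇑ψ) ξ with hh
  have key : ∀ ω : ℝ, fourierLine (⇑ψ) ω * Complex.exp (Complex.I * ω * s)
      = h ((2 * π)⁻¹ * ω) := by
    intro ω
    rw [hh]
    simp only
    rw [L1, mul_comm]
    have h1 : (2 * π)⁻¹ * ω = ω / (2 * π) := by ring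
    rw [h1]
    congr 2
    have : 2 * π * (ω / (2 * π)) * s = ω * s := by field_simp
    rw [this]
    push_cast
    ring
  calc ∫ ω : ℝ, fourierLine (⇑ψ) ω * Complex.exp (Complex.I * ω * s)
      = ∫ ω : ℝ, h ((2 * π)⁻¹ * ω) := by exact integral_congr_ae (Filter.Eventually.of_forall key)
    _ = |2 * π| • ∫ ξ : ℝ, h ξ := Measure.integral_comp_inv_mul_left h (2 * π)
    _ = ((2 * π : ℝ) : ℂ) * ∫ ξ : ℝ, h ξ := by
        rw [abs_of_pos hπ, real_smul]
    _ = ((2 * π : ℝ) : ℂ) * 𝓕⁻ (𝓕 ⇑ψ) s := by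
        congr 1
        rw [Real.fourierInv_eq']
        congr 1
        funext ξ
        rw [hh, smul_eq_mul]
        simp only []
        push_cast [RCLike.inner_apply]
        simp only [starRingEnd_apply, star_trivial]
        ring_nf
    _ = ((2 * π : ℝ) : ℂ) * ψ s := by
        rw [ψ.continuous.fourierInv_fourier_eq ψ.integrable
          (SchwartzMap.fourierTransformCLM ℂ ψ).integrable]

lemma L3 (ψ : 𝓢(ℝ, ℂ)) {α : ℝ} (hα : 0 < α) (r : ℝ) :
    ∫ ω : ℝ, (starRingEnd ℂ) (fourierLine (⇑ψ) (α * ω)) * Complex.exp (-(Complex.I * ω * r))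
      = ((2 * π : ℝ) : ℂ) * ((α⁻¹ : ℝ) : ℂ) * (starRingEnd ℂ) (ψ (r / α)) := by
  have hα' : α ≠ 0 := ne_of_gt hα
  -- conjugated inversion at s = r / α
  have hconj : ∫ ω : ℝ, (starRingEnd ℂ) (fourierLine (⇑ψ) ω) * Complex.exp (-(Complex.I * ω * (r / α)))
      = ((2 * π : ℝ) : ℂ) * (starRingEnd ℂ) (ψ (r / α)) := by
    have := congrArg (starRingEnd ℂ) (L2 ψ (r / α))
    rw [← integral_conj] at this
    rw [map_mul, Complex.conj_ofReal] at this
    rw [← this]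
    congr 1
    funext ω
    rw [map_mul, ← Complex.exp_conj]
    congr 2
    simp [Complex.conj_ofReal]
  set g : ℝ → ℂ := fun ω => (starRingEnd ℂ) (fourierLine (⇑ψ) ω) * Complex.exp (-(Complex.I * ω * (r / α))) with hg
  calc ∫ ω : ℝ, (starRingEnd ℂ) (fourierLine (⇑ψ) (α * ω)) * Complex.exp (-(Complex.I * ω * r))
      = ∫ ω : ℝ, g (α * ω) := by
        congr 1; funext ω
        rw [hg]; simp only []
        congr 2
        have hαc : (α : ℂ) ≠ 0 := by exact_mod_cast hα'
        push_cast
        field_simp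
    _ = |α⁻¹| • ∫ ω, g ω := Measure.integral_comp_mul_left g α
    _ = ((α⁻¹ : ℝ) : ℂ) * (((2 * π : ℝ) : ℂ) * (starRingEnd ℂ) (ψ (r / α))) := by
        rw [hconj, abs_of_pos (inv_pos.mpr hα), real_smul]
    _ = _ := by ring

lemma Lint (ψ : 𝓢(ℝ, ℂ)) {α : ℝ} (hα : 0 < α) :
    Integrable (fun ω : ℝ => (starRingEnd ℂ) (fourierLine (⇑ψ) (α * ω))) := by
  have h1 : Integrable (𝓕 ⇑ψ) := (SchwartzMap.fourierTransformCLM ℂ ψ).integrable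
  have h2 : Integrable (fun ω : ℝ => 𝓕 (⇑ψ) ((α / (2 * π)) * ω)) :=
    h1.comp_mul_left' (by positivity : α / (2 * π) ≠ 0)
  have h3 : Integrable (fun ω : ℝ => fourierLine (⇑ψ) (α * ω)) := by
    apply h2.congr
    filter_upwards with ω
    rw [L1]
    congr 1
    field_simp
  exact h3.mono (Complex.continuous_conj.comp_aestronglyMeasurable h3.aestronglyMeasurable)
    (Filter.Eventually.of_forall fun ω => by simp)


/-- For `f ∈ L¹(ℝ^m)` and Schwartz `ψ`, the ridgelet transform in
polar coordinates has the Fourier representation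
`R_ψf(u,α,β) = (2π)⁻¹ ∫ 𝓕f(ωu) conj(𝓕ψ(αω)) e^{iωβ} dω`, the integrand being
integrable in `ω`. -/
theorem stmt4 (m : ℕ) (hm : 1 ≤ m)
    (f : EuclideanSpace ℝ (Fin m) → ℂ) (hf : Integrable f)
    (ψ : 𝓢(ℝ, ℂ))
    (u : EuclideanSpace ℝ (Fin m)) (hu : ‖u‖ = 1) (α : ℝ) (hα : 0 < α) (β : ℝ) :
    Integrable (fun ω : ℝ =>
      fourierEuc f (ω • u) * (starRingEnd ℂ) (fourierLine ψ (α * ω))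
        * Complex.exp (Complex.I * ω * β)) ∧
    ∫ x : EuclideanSpace ℝ (Fin m),
        f x * (starRingEnd ℂ) (ψ ((⟪u, x⟫ - β) / α)) * ((α⁻¹ : ℝ) : ℂ)
      = ((2 * Real.pi : ℝ) : ℂ)⁻¹
          * ∫ ω : ℝ, fourierEuc f (ω • u) * (starRingEnd ℂ) (fourierLine ψ (α * ω))
              * Complex.exp (Complex.I * ω * β) := by
  set g : ℝ → ℂ := fun ω => (starRingEnd ℂ) (fourierLine (⇑ψ) (α * ω)) with hgdef
  have hg : Integrable g := Lint ψ hα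
  set G : EuclideanSpace ℝ (Fin m) × ℝ → ℂ := fun p =>
    (f p.1 * g p.2) *
      (Complex.exp (-(Complex.I * p.2 * (⟪u, p.1⟫ : ℝ))) * Complex.exp (Complex.I * p.2 * β))
    with hGdef
  have hinner : Continuous fun p : EuclideanSpace ℝ (Fin m) × ℝ => (⟪u, p.1⟫ : ℝ) :=
    continuous_const.inner continuous_fst
  have hphase : Continuous fun p : EuclideanSpace ℝ (Fin m) × ℝ =>
      Complex.exp (-(Complex.I * p.2 * (⟪u, p.1⟫ : ℝ))) * Complex.exp (Complex.I * p.2 * β) := by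
    apply Continuous.mul
    · exact Complex.continuous_exp.comp (by fun_prop)
    · exact Complex.continuous_exp.comp (by fun_prop)
  have hGmeas : AEStronglyMeasurable G (volume.prod volume) := by
    have := (hf.mul_prod hg).aestronglyMeasurable.mul hphase.aestronglyMeasurable
    exact this
  have hGint : Integrable G (volume.prod volume) := by
    apply (hf.norm.mul_prod hg.norm).mono' hGmeas
    filter_upwards with p
    rw [hGdef]
    simp only [norm_mul, Complex.norm_exp]
    have h1 : (-(Complex.I * p.2 * (⟪u, p.1⟫ : ℝ))).re = 0 := by simp
    have h2 : (Complex.I * (p.2 : ℂ) * (β : ℂ)).re = 0 := by simp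
    rw [h1, h2]
    simp
  -- inner integral in ω
  have hL : ∀ x : EuclideanSpace ℝ (Fin m), (∫ ω : ℝ, G (x, ω))
      = ((2 * π : ℝ) : ℂ) * (f x * (starRingEnd ℂ) (ψ ((⟪u, x⟫ - β) / α)) * ((α⁻¹ : ℝ) : ℂ)) := by
    intro x
    have key : ∀ ω : ℝ, G (x, ω)
        = f x * ((starRingEnd ℂ) (fourierLine (⇑ψ) (α * ω))
            * Complex.exp (-(Complex.I * ω * ((⟪u, x⟫ - β : ℝ) : ℂ)))) := by
      intro ω
      rw [hGdef]
      simp only [hgdef]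
      rw [mul_assoc, mul_assoc]
      congr 2
      rw [← Complex.exp_add]
      congr 1
      push_cast
      ring
    rw [integral_congr_ae (Filter.Eventually.of_forall key), integral_const_mul]
    have h3 := L3 ψ hα (⟪u, x⟫ - β)
    push_cast at h3 ⊢
    rw [h3]
    ring
  -- inner integral in x
  have hR : ∀ ω : ℝ, (∫ x : EuclideanSpace ℝ (Fin m), G (x, ω))
      = fourierEuc f (ω • u) * (starRingEnd ℂ) (fourierLine (⇑ψ) (α * ω))
          * Complex.exp (Complex.I * ω * β) := by
    intro ω
    have key : ∀ x : EuclideanSpace ℝ (Fin m), G (x, ω)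
        = (f x * Complex.exp (-(Complex.I * ((⟪(ω • u : EuclideanSpace ℝ (Fin m)), x⟫ : ℝ) : ℂ))))
            * (g ω * Complex.exp (Complex.I * ω * β)) := by
      intro x
      rw [hGdef]
      simp only []
      rw [real_inner_smul_left]
      have h4 : (-(Complex.I * ω * ((⟪u, x⟫ : ℝ) : ℂ)))
          = -(Complex.I * ((ω * ⟪u, x⟫ : ℝ) : ℂ)) := by
        push_cast; ring
      rw [h4]
      ring
    rw [integral_congr_ae (Filter.Eventually.of_forall key), integral_mul_const]
    have h5 : fourierEuc f (ω • u)
        = ∫ x : EuclideanSpace ℝ (Fin m),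
            f x * Complex.exp (-(Complex.I * ((⟪(ω • u : EuclideanSpace ℝ (Fin m)), x⟫ : ℝ) : ℂ))) := rfl
    rw [← h5, hgdef]
    ring
  have hswap := MeasureTheory.integral_integral_swap
    (f := fun (x : EuclideanSpace ℝ (Fin m)) (ω : ℝ) => G (x, ω)) (by exact hGint)
  constructor
  · have h1 : Integrable (fun ω : ℝ => ∫ x : EuclideanSpace ℝ (Fin m), G (x, ω)) :=
      hGint.integral_prod_right
    exact h1.congr (Filter.Eventually.of_forall hR)
  · have h2π : ((2 * π : ℝ) : ℂ) ≠ 0 := by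
      simp only [ne_eq, Complex.ofReal_eq_zero]
      positivity
    calc ∫ x : EuclideanSpace ℝ (Fin m),
          f x * (starRingEnd ℂ) (ψ ((⟪u, x⟫ - β) / α)) * ((α⁻¹ : ℝ) : ℂ)
        = ((2 * π : ℝ) : ℂ)⁻¹ * ∫ x : EuclideanSpace ℝ (Fin m), ((2 * π : ℝ) : ℂ)
            * (f x * (starRingEnd ℂ) (ψ ((⟪u, x⟫ - β) / α)) * ((α⁻¹ : ℝ) : ℂ)) := by
          rw [integral_const_mul, ← mul_assoc, inv_mul_cancel₀ h2π, one_mul]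
      _ = ((2 * π : ℝ) : ℂ)⁻¹ * ∫ x : EuclideanSpace ℝ (Fin m), ∫ ω : ℝ, G (x, ω) := by
          congr 1
          exact integral_congr_ae (Filter.Eventually.of_forall fun x => (hL x).symm)
      _ = ((2 * π : ℝ) : ℂ)⁻¹ * ∫ ω : ℝ, ∫ x : EuclideanSpace ℝ (Fin m), G (x, ω) := by
          rw [hswap]
      _ = _ := by
          congr 1
          exact integral_congr_ae (Filter.Eventually.of_forall hR)
end

section
/- Let g : ℝ → ℂ be a Schwartz function and let T be a tempered distribution on ℝ (a continuous linear functional on the complex Schwartz space). Define W(α,β) = T(z ↦ g(αz + β)) for α > 0, β ∈ ℝ. Then W has slow growth on the half-plane: there exist N ∈ ℕ and a constant C > 0 such that |W(α,β)| ≤ C · (α + 1/α)^N · (1 + β²)^{N/2} for all α > 0 and β ∈ ℝ. -/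
open scoped SchwartzMap

set_option maxHeartbeats 1000000 in
/-- Let `g` be a Schwartz function and `T` a tempered distribution
on `ℝ`, and let `W(α,β) = T(z ↦ g(αz + β))` for `α > 0`. Then `W` has slow growth on
the half-plane: `|W(α,β)| ≤ C (α + 1/α)^N (1 + β²)^{N/2}` for some `N` and `C > 0`. -/
theorem stmt12 (g : 𝓢(ℝ, ℂ)) (T : 𝓢(ℝ, ℂ) →L[ℂ] ℂ)
    (G : ℝ → ℝ → 𝓢(ℝ, ℂ))
    (hG : ∀ α : ℝ, 0 < α → ∀ β : ℝ, ⇑(G α β) = fun z : ℝ => g (α * z + β)) :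
    ∃ (N : ℕ) (C : ℝ), 0 < C ∧ ∀ (α β : ℝ), 0 < α →
      ‖T (G α β)‖ ≤ C * (α + 1 / α) ^ N * (1 + β ^ 2) ^ ((N : ℝ) / 2) := by
  -- `f ↦ ‖T f‖` is a continuous seminorm, hence bounded by finitely many seminorms
  obtain ⟨s, C₀, hC₀, hbound⟩ :=
    Seminorm.bound_of_continuous (schwartz_withSeminorms ℂ ℝ ℂ)
      ((normSeminorm ℂ ℂ).comp T.toLinearMap) (by exact T.continuous.norm)
  set m : ℕ := s.sup (fun kn => max kn.1 kn.2) with hm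
  set Sg : ℝ := ((Finset.Iic (m, m)).sup (schwartzSeminormFamily ℂ ℝ ℂ)) g with hSg
  have hSg0 : 0 ≤ Sg := apply_nonneg _ _
  set Mg : ℝ := 2 ^ m * Sg with hMg
  have hMg0 : 0 ≤ Mg := by positivity
  set D : ℝ := 2 ^ (m + 1) * (Mg + 1) with hD
  have hD0 : 0 < D := by positivity
  refine ⟨2 * (m + 1), (C₀ : ℝ) * D, by positivity, fun α β hα => ?_⟩
  have hα' : 0 < 1 / α := by positivity
  set N : ℕ := 2 * (m + 1) with hN
  have hhalf : ((N : ℝ)) / 2 = ((m + 1 : ℕ) : ℝ) := by push_cast [hN]; ring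
  have hb1 : (0 : ℝ) ≤ 1 + β ^ 2 := by positivity
  rw [hhalf, Real.rpow_natCast]
  -- key estimate on each seminorm of `G α β`
  set P : ℝ := (α + 1 / α) ^ N * ((1 + β ^ 2) ^ (m + 1) * D) with hP
  have hP0 : 0 ≤ P := by positivity
  have key : ∀ kn ∈ s, schwartzSeminormFamily ℂ ℝ ℂ kn (G α β) ≤ P := by
    rintro ⟨k, n⟩ hkn
    have hkm : k ≤ m := le_trans (le_max_left _ _) (Finset.le_sup (f := fun kn : ℕ × ℕ => max kn.1 kn.2) hkn)
    have hnm : n ≤ m := le_trans (le_max_right _ _) (Finset.le_sup (f := fun kn : ℕ × ℕ => max kn.1 kn.2) hkn)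
    refine SchwartzMap.seminorm_le_bound' ℂ k n _ hP0 fun x => ?_
    rw [hG α hα β]
    have hcd : ContDiff ℝ n (fun w : ℝ => g (w + β)) :=
      (g.smooth n).comp (contDiff_id.add contDiff_const)
    have h1 : iteratedDeriv n (fun z : ℝ => g (α * z + β)) x
        = α ^ n • iteratedDeriv n (fun w : ℝ => g (w + β)) (α * x) :=
      congrFun (iteratedDeriv_comp_const_smul hcd α) x
    have h2 : iteratedDeriv n (fun w : ℝ => g (w + β)) (α * x)
        = iteratedDeriv n (⇑g) (α * x + β) :=
      congrFun (iteratedDeriv_comp_add_const n (⇑g) β) (α * x)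
    rw [h1, h2, norm_smul, Real.norm_eq_abs, abs_pow, abs_of_pos hα]
    set y : ℝ := α * x + β with hy
    have hxb : |x| ≤ (1 + |y|) * (1 + |β|) / α := by
      rw [le_div_iff₀ hα]
      have : x * α = y - β := by rw [hy]; ring
      calc |x| * α = |x * α| := by rw [abs_mul, abs_of_pos hα]
        _ = |y - β| := by rw [this]
        _ ≤ |y| + |β| := abs_sub _ _
        _ ≤ (1 + |y|) * (1 + |β|) := by nlinarith [abs_nonneg y, abs_nonneg β]
    have hgy : (1 + |y|) ^ k * ‖iteratedDeriv n (⇑g) y‖ ≤ Mg := by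
      have := SchwartzMap.one_add_le_sup_seminorm_apply (𝕜 := ℂ) (m := (m, m)) hkm hnm g y
      rw [norm_iteratedFDeriv_eq_norm_iteratedDeriv] at this
      rw [hMg, hSg]
      exact this
    have hgy0 : 0 ≤ ‖iteratedDeriv n (⇑g) y‖ := norm_nonneg _
    calc |x| ^ k * (α ^ n * ‖iteratedDeriv n (⇑g) y‖)
        ≤ ((1 + |y|) * (1 + |β|) / α) ^ k * (α ^ n * ‖iteratedDeriv n (⇑g) y‖) := by
          exact mul_le_mul_of_nonneg_right (pow_le_pow_left₀ (abs_nonneg x) hxb k)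
            (by positivity)
      _ = ((1 / α) ^ k * α ^ n) * (1 + |β|) ^ k * ((1 + |y|) ^ k * ‖iteratedDeriv n (⇑g) y‖) := by
          rw [div_pow, mul_pow]; ring
      _ ≤ ((1 / α) ^ k * α ^ n) * (1 + |β|) ^ k * Mg := by
          have h0 : (0:ℝ) ≤ (1 / α) ^ k * α ^ n * (1 + |β|) ^ k := by positivity
          exact mul_le_mul_of_nonneg_left hgy h0
      _ ≤ P := by
          have hle2 : (2 : ℝ) ≤ α + 1 / α := by
            rw [← sub_nonneg]
            have : α + 1 / α - 2 = (α - 1) ^ 2 / α := by field_simp; ring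
            rw [this]; positivity
          have hA1 : (1 : ℝ) ≤ α + 1 / α := by linarith
          have hpow : (1 / α) ^ k * α ^ n ≤ (α + 1 / α) ^ N := by
            calc (1 / α) ^ k * α ^ n ≤ (α + 1 / α) ^ k * (α + 1 / α) ^ n :=
                  mul_le_mul (pow_le_pow_left₀ hα'.le (by linarith) k)
                    (pow_le_pow_left₀ hα.le (by linarith) n) (by positivity) (by positivity)
              _ = (α + 1 / α) ^ (k + n) := by rw [pow_add]
              _ ≤ (α + 1 / α) ^ N := pow_le_pow_right₀ hA1 (by omega)
          have hbeta : (1 + |β|) ^ k ≤ 2 ^ (m + 1) * (1 + β ^ 2) ^ (m + 1) := by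
            have h1b : (1 : ℝ) ≤ 1 + |β| := by linarith [abs_nonneg β]
            calc (1 + |β|) ^ k ≤ (1 + |β|) ^ (2 * (m + 1)) := pow_le_pow_right₀ h1b (by omega)
              _ = ((1 + |β|) ^ 2) ^ (m + 1) := by rw [← pow_mul, mul_comm]
              _ ≤ (2 * (1 + β ^ 2)) ^ (m + 1) :=
                  pow_le_pow_left₀ (by positivity)
                    (by nlinarith [sq_abs β, abs_nonneg β, sq_nonneg (|β| - 1)]) _
              _ = 2 ^ (m + 1) * (1 + β ^ 2) ^ (m + 1) := by rw [mul_pow]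
          calc ((1 / α) ^ k * α ^ n) * (1 + |β|) ^ k * Mg
              ≤ (α + 1 / α) ^ N * (2 ^ (m + 1) * (1 + β ^ 2) ^ (m + 1)) * Mg :=
                mul_le_mul (mul_le_mul hpow hbeta (by positivity) (by positivity))
                  le_rfl hMg0 (by positivity)
            _ ≤ P := by
                rw [hP, hD]
                have : (0:ℝ) < (α + 1/α) ^ N := by positivity
                nlinarith [pow_pos (show (0:ℝ) < 2 by norm_num) (m+1),
                  pow_nonneg hb1 (m+1), this]
  have hsup : (s.sup (schwartzSeminormFamily ℂ ℝ ℂ)) (G α β) ≤ P :=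
    Seminorm.finset_sup_apply_le hP0 key
  have hT : ‖T (G α β)‖ ≤ (C₀ : ℝ) * ((s.sup (schwartzSeminormFamily ℂ ℝ ℂ)) (G α β)) := by
    have h := hbound (G α β)
    simp only [Seminorm.comp_apply, Seminorm.smul_apply, NNReal.smul_def, smul_eq_mul,
      coe_normSeminorm, ContinuousLinearMap.coe_coe] at h
    exact h
  calc ‖T (G α β)‖ ≤ (C₀ : ℝ) * ((s.sup (schwartzSeminormFamily ℂ ℝ ℂ)) (G α β)) := hT
    _ ≤ (C₀ : ℝ) * P := mul_le_mul_of_nonneg_left hsup C₀.coe_nonneg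
    _ = (C₀ : ℝ) * D * (α + 1 / α) ^ N * (1 + β ^ 2) ^ (m + 1) := by rw [hP]; ring
end
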